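/- Let T be a generalized Collatz mapping of relatively prime type on Λ. For each k ≥ 1 the map Ω_k : Λ/d^kΛ → (Λ/dΛ)^k sending x + d^kΛ to the sequence (T^0(x) mod dΛ, …, T^{k-1}(x) mod dΛ) is a well-defined bijection. -/
import Mathlib


def res {e : ℕ} (d : ℕ) (x : Fin e → ℤ) : Fin e → ZMod d := fun i => (x i : ZMod d)

lemma res_eq_iff {e : ℕ} (n : ℕ) (a b : Fin e → ℤ) :
    res n a = res n b ↔ ∀ i, (n : ℤ) ∣ a i - b i := by
  simp only [res, funext_iff, ZMod.intCast_eq_intCast_iff, Int.modEq_iff_dvd]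
  exact forall_congr' fun i => dvd_sub_comm

/-- for a generalized Collatz mapping of relatively prime type, the
map `Ω_k : Λ/d^kΛ → (Λ/dΛ)^k`, `x + d^kΛ ↦ (T^0(x) mod dΛ, …, T^{k-1}(x) mod dΛ)`,
is a well-defined bijection. -/
theorem omega_k_bijective
    {e : ℕ} (d : ℕ) (hd : 1 < d)
    (m : (Fin e → ZMod d) → ℤ) (r : (Fin e → ZMod d) → (Fin e → ℤ))
    (hm : ∀ ω, 0 < m ω)
    (hcop : ∀ ω, IsCoprime (m ω) (d : ℤ))
    (T : (Fin e → ℤ) → (Fin e → ℤ))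
    (hT : ∀ x : Fin e → ℤ, (d : ℤ) • T x = m (res d x) • x + r (res d x))
    (k : ℕ) (hk : 1 ≤ k) :
    ∃ Ω : (Fin e → ZMod (d ^ k)) → (Fin k → Fin e → ZMod d),
      (∀ x : Fin e → ℤ, Ω (res (d ^ k) x) = fun i : Fin k => res d (T^[i.val] x)) ∧
      Function.Bijective Ω := by
  have hd0 : (d : ℤ) ≠ 0 := by positivity
  haveI : NeZero d := ⟨by omega⟩
  haveI : NeZero (d ^ k) := ⟨pow_ne_zero k (by omega)⟩
  -- coordinatewise form of hT
  have hTc : ∀ x : Fin e → ℤ, ∀ i,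
      (d : ℤ) * T x i = m (res d x) * x i + r (res d x) i := by
    intro x i
    have := congrFun (hT x) i
    simpa using this
  -- one-step contraction
  have step : ∀ (n : ℕ) (x y : Fin e → ℤ),
      (∀ i, (d : ℤ) ^ (n + 1) ∣ x i - y i) →
      ∀ i, (d : ℤ) ^ n ∣ T x i - T y i := by
    intro n x y h i
    have hres : res d x = res d y := by
      rw [res_eq_iff]
      intro i
      exact dvd_trans (dvd_pow_self (d:ℤ) (Nat.succ_ne_zero n)) (h i)
    have key : (d : ℤ) * (T x i - T y i) = m (res d x) * (x i - y i) := by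
      have h1 := hTc x i
      have h2 := hTc y i
      rw [hres] at h1 ⊢
      linear_combination h1 - h2
    have hdvd : (d : ℤ) ^ (n + 1) ∣ (d : ℤ) * (T x i - T y i) := by
      rw [key]; exact Dvd.dvd.mul_left (h i) _
    rw [pow_succ'] at hdvd
    exact (mul_dvd_mul_iff_left hd0).mp hdvd
  -- forward: well-definedness
  have fwd : ∀ (j n : ℕ) (x y : Fin e → ℤ),
      (∀ i, (d : ℤ) ^ (n + j) ∣ x i - y i) →
      ∀ i, (d : ℤ) ^ n ∣ T^[j] x i - T^[j] y i := by
    intro j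
    induction j with
    | zero => intro n x y h i; simpa using h i
    | succ j ih =>
        intro n x y h i
        have hTxy : ∀ i, (d : ℤ) ^ (n + j) ∣ T x i - T y i := by
          apply step
          intro i
          have := h i
          rwa [show n + (j + 1) = (n + j) + 1 by ring] at this
        have := ih n (T x) (T y) hTxy i
        simpa [Function.iterate_succ_apply] using this
  -- backward: injectivity key
  have bwd : ∀ (n : ℕ) (x y : Fin e → ℤ),
      (∀ j < n, res d (T^[j] x) = res d (T^[j] y)) →
      ∀ i, (d : ℤ) ^ n ∣ x i - y i := by
    intro n
    induction n with
    | zero => intro x y _ i; simp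
    | succ n ih =>
        intro x y h i
        have h0 : res d x = res d y := by
          simpa using h 0 (Nat.succ_pos n)
        have hTxy : ∀ i, (d : ℤ) ^ n ∣ T x i - T y i := by
          apply ih
          intro j hj
          have := h (j + 1) (by omega)
          simpa [Function.iterate_succ_apply] using this
        have key : (d : ℤ) * (T x i - T y i) = m (res d x) * (x i - y i) := by
          have h1 := hTc x i
          have h2 := hTc y i
          rw [h0] at h1 ⊢
          linear_combination h1 - h2
        have hdvd : (d : ℤ) ^ (n + 1) ∣ m (res d x) * (x i - y i) := by
          rw [← key, pow_succ']
          exact mul_dvd_mul_left _ (hTxy i)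
        have hcop' : IsCoprime ((d : ℤ) ^ (n + 1)) (m (res d x)) :=
          (IsCoprime.pow_left (hcop (res d x)).symm)
        exact hcop'.dvd_of_dvd_mul_left hdvd
  -- the lift
  set lift : (Fin e → ZMod (d ^ k)) → (Fin e → ℤ) :=
    fun z i => ((z i).val : ℤ) with hlift
  have hres_lift : ∀ z, res (d ^ k) (lift z) = z := by
    intro z
    funext i
    simp [res, hlift, ZMod.natCast_val, ZMod.intCast_cast, ZMod.ringHom_map_cast]
  refine ⟨fun z => fun i => res d (T^[i.val] (lift z)), ?_, ?_⟩
  · intro x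
    funext i
    have hxy : ∀ j, (d : ℤ) ^ k ∣ lift (res (d ^ k) x) j - x j := by
      have := (res_eq_iff (d ^ k) (lift (res (d ^ k) x)) x).mp
        (by rw [hres_lift])
      intro j
      have h := this j
      rwa [Nat.cast_pow] at h
    have hi : (1 : ℕ) + i.val ≤ k := by omega
    have hdvd : ∀ j, (d : ℤ) ^ (1 + i.val) ∣ lift (res (d ^ k) x) j - x j :=
      fun j => dvd_trans (pow_dvd_pow _ hi) (hxy j)
    have := fwd i.val 1 (lift (res (d ^ k) x)) x hdvd
    rw [res_eq_iff]
    intro j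
    simpa using this j
  · rw [Fintype.bijective_iff_injective_and_card]
    constructor
    · intro z1 z2 hz
      have hj : ∀ j < k, res d (T^[j] (lift z1)) = res d (T^[j] (lift z2)) := by
        intro j hj
        exact congrFun hz ⟨j, hj⟩
      have := bwd k (lift z1) (lift z2) hj
      have : res (d ^ k) (lift z1) = res (d ^ k) (lift z2) := by
        rw [res_eq_iff]
        intro i
        rw [Nat.cast_pow]
        exact this i
      rwa [hres_lift, hres_lift] at this
    · simp [ZMod.card, Fintype.card_fun]
      ring
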